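/- Let k = 2 and let P = P_2^{(2,2)} ∈ F_{2,2} be the standard tableau with P(1,1) = 1, P(1,2) = 2, P(2,1) = 3, P(2,2) = 4 (bottom row 1,2 and top row 3,4). Then for all n ≥ 2, full_n^P = C_{n−1}, where C_m = (1/(m+1))·binom(2m,m) is the m-th Catalan number. -/

import Mathlib

/-- `F` is a filling of the `k × n` rectangle (row `i`, `1 ≤ i ≤ k`, counted from the
bottom; column `j`, `1 ≤ j ≤ n`) with the integers `1, …, kn`, each used exactly once,
whose entries strictly increase up each column.  Cells outside the rectangle carry `0`. -/
def IsFilling (n k : ℕ) (F : ℕ → ℕ → ℕ) : Prop :=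
  (∀ i j, F i j ≠ 0 → 1 ≤ i ∧ i ≤ k ∧ 1 ≤ j ∧ j ≤ n) ∧
  Set.BijOn (fun p : ℕ × ℕ => F p.1 p.2) (Set.Icc 1 k ×ˢ Set.Icc 1 n) (Set.Icc 1 (k * n)) ∧
  ∀ i j, 1 ≤ i → i < k → 1 ≤ j → j ≤ n → F i j < F (i + 1) j

/-- The entries of `F` in columns `i, …, i + j - 1` are in the same relative order as the
`k × j` pattern `P`; i.e. `F` has a `P`-match starting at position `i`. -/
def MatchAt (j k : ℕ) (P F : ℕ → ℕ → ℕ) (i : ℕ) : Prop :=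
  ∀ a b c d, 1 ≤ a → a ≤ k → 1 ≤ b → b ≤ j → 1 ≤ c → c ≤ k → 1 ≤ d → d ≤ j →
    (F a (i - 1 + b) < F c (i - 1 + d) ↔ P a b < P c d)

/-- `full_n^Υ`: the number of fillings `F ∈ F_{n,k}` having `Υ`-matches starting at
every position `1, …, n-1` (for two-column patterns `Υ ⊆ F_{2,k}`). -/
noncomputable def fullCount (n k : ℕ) (U : Set (ℕ → ℕ → ℕ)) : ℕ :=
  Nat.card {F : ℕ → ℕ → ℕ // IsFilling n k F ∧
    ∀ i, 1 ≤ i → i ≤ n - 1 → ∃ P ∈ U, MatchAt 2 k P F i}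

/-- The standard tableau `P_2^{(2,2)} ∈ F_{2,2}` with bottom row `1, 2` and top row
`3, 4` (cells outside the `2 × 2` rectangle carry `0`). -/
def P22 : ℕ → ℕ → ℕ := fun i j =>
  if i = 1 then (if j = 1 then 1 else if j = 2 then 2 else 0)
  else if i = 2 then (if j = 1 then 3 else if j = 2 then 4 else 0)
  else 0


open List DyckStep

namespace Stmt13Aux

/-- the `j`-th smallest element (0-based) of a finset of naturals -/
def esort (s : Finset ℕ) (j : ℕ) : ℕ := (s.sort (· ≤ ·)).getD j 0

lemma esort_eq {s : Finset ℕ} {k : ℕ} (h : s.card = k) {j : ℕ} (hj : j < k) :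
    esort s j = s.orderEmbOfFin h ⟨j, hj⟩ := by
  rw [Finset.orderEmbOfFin_apply, esort,
    List.getD_eq_getElem _ _ (by rw [Finset.length_sort, h]; exact hj)]
  simp [Fin.getElem_fin]

lemma esort_mem {s : Finset ℕ} {k : ℕ} (h : s.card = k) {j : ℕ} (hj : j < k) :
    esort s j ∈ s := by
  rw [esort_eq h hj]; exact Finset.orderEmbOfFin_mem s h _

lemma esort_lt_esort {s : Finset ℕ} {k : ℕ} (h : s.card = k) {j j' : ℕ}
    (hjj' : j < j') (hj' : j' < k) : esort s j < esort s j' := by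
  rw [esort_eq h (hjj'.trans hj'), esort_eq h hj']
  exact (s.orderEmbOfFin h).strictMono (Fin.mk_lt_mk.mpr hjj')

lemma esort_surj {s : Finset ℕ} {k : ℕ} (h : s.card = k) {v : ℕ} (hv : v ∈ s) :
    ∃ j, j < k ∧ esort s j = v := by
  have : v ∈ Set.range (s.orderEmbOfFin h) := by
    rw [Finset.range_orderEmbOfFin]; exact hv
  obtain ⟨i, hi⟩ := this
  exact ⟨i, i.2, by rw [esort_eq h i.2]; simpa using hi⟩

lemma esort_unique {s : Finset ℕ} {k : ℕ} (h : s.card = k) {f : ℕ → ℕ}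
    (hmem : ∀ j, j < k → f j ∈ s) (hmono : ∀ j j', j < j' → j' < k → f j < f j') :
    ∀ j, j < k → f j = esort s j := by
  intro j hj
  have huniq := Finset.orderEmbOfFin_unique h (f := fun i : Fin k => f i)
    (fun i => hmem i i.2) (fun a b hab => hmono a b hab b.2)
  rw [esort_eq h hj]
  exact congrFun huniq ⟨j, hj⟩

lemma esort_zero_of_zero_mem {s : Finset ℕ} {k : ℕ} (h : s.card = k) (h0 : (0:ℕ) ∈ s)
    (hk : 0 < k) : esort s 0 = 0 := by
  obtain ⟨j, hj, hej⟩ := esort_surj h h0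
  rcases Nat.eq_zero_or_pos j with rfl | hjpos
  · exact hej
  · have := esort_lt_esort h hjpos hj; omega

lemma le_card_filter {s : Finset ℕ} {k : ℕ} (h : s.card = k) {j m : ℕ}
    (hj : j < k) (hm : esort s j < m) : j + 1 ≤ (s.filter (· < m)).card := by
  have hsub : (Finset.range (j+1)).image (esort s) ⊆ s.filter (· < m) := by
    intro v hv
    simp only [Finset.mem_image, Finset.mem_range] at hv
    obtain ⟨i, hi, rfl⟩ := hv
    refine Finset.mem_filter.mpr ⟨esort_mem h (by omega), ?_⟩
    rcases eq_or_lt_of_le (Nat.lt_succ_iff.mp hi) with rfl | hij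
    · exact hm
    · exact lt_trans (esort_lt_esort h hij hj) hm
  have hcard : ((Finset.range (j+1)).image (esort s)).card = j + 1 := by
    rw [Finset.card_image_of_injOn, Finset.card_range]
    intro a ha b hb hab
    simp only [Finset.coe_range, Set.mem_Iio] at ha hb
    rcases lt_trichotomy a b with hlt | heq | hgt
    · exact absurd hab (ne_of_lt (esort_lt_esort h hlt (by omega)))
    · exact heq
    · exact absurd hab.symm (ne_of_lt (esort_lt_esort h hgt (by omega)))
  calc j + 1 = ((Finset.range (j+1)).image (esort s)).card := hcard.symm
    _ ≤ _ := Finset.card_le_card hsub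

lemma card_filter_le {s : Finset ℕ} {k : ℕ} (h : s.card = k) {j m : ℕ}
    (hj : j < k) (hm : m ≤ esort s j) : (s.filter (· < m)).card ≤ j := by
  have hsub : s.filter (· < m) ⊆ (Finset.range j).image (esort s) := by
    intro v hv
    rw [Finset.mem_filter] at hv
    obtain ⟨i, hi, rfl⟩ := esort_surj h hv.1
    refine Finset.mem_image.mpr ⟨i, Finset.mem_range.mpr ?_, rfl⟩
    by_contra hij
    push_neg at hij
    have hle : esort s j ≤ esort s i := by
      rcases eq_or_lt_of_le hij with rfl | hlt
      · exact le_rfl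
      · exact (esort_lt_esort h hlt hi).le
    have := hv.2
    try simp only [decide_eq_true_eq] at this
    omega
  calc (s.filter (· < m)).card ≤ ((Finset.range j).image (esort s)).card :=
        Finset.card_le_card hsub
    _ ≤ j := le_trans Finset.card_image_le (by rw [Finset.card_range])

lemma card_filter_range_eq_count (l : List DyckStep) (s : DyckStep) :
    ∀ m, m ≤ l.length →
      ((Finset.range m).filter (fun i => l.getD i U = s)).card = (l.take m).count s := by
  intro m
  induction m with
  | zero => simp
  | succ m ih =>
    intro hm
    have hm' : m ≤ l.length := by omega
    have hlt : m < l.length := hm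
    rw [Finset.range_add_one, Finset.filter_insert, List.take_succ,
      List.getElem?_eq_getElem hlt]
    by_cases hs : l.getD m U = s
    · rw [if_pos hs, Finset.card_insert_of_notMem (by simp), ih hm']
      rw [List.getD_eq_getElem _ _ hlt] at hs
      rw [Option.toList_some, List.count_append, List.count_singleton']
      simp [hs]
    · rw [if_neg hs, ih hm']
      rw [List.getD_eq_getElem _ _ hlt] at hs
      rw [Option.toList_some, List.count_append, List.count_singleton']
      simp [hs]


/-- positions (0-based) of `D`s in `l` -/
def idxD (l : List DyckStep) : Finset ℕ :=
  (Finset.range l.length).filter (fun v => l.getD v U = D)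

/-- positions (0-based) of `U`s in `l` -/
def idxU (l : List DyckStep) : Finset ℕ :=
  (Finset.range l.length).filter (fun v => l.getD v U = U)

lemma card_idxD (l : List DyckStep) : (idxD l).card = l.count D := by
  rw [idxD, card_filter_range_eq_count l D l.length le_rfl, List.take_length]

lemma card_idxU (l : List DyckStep) : (idxU l).card = l.count U := by
  rw [idxU, card_filter_range_eq_count l U l.length le_rfl, List.take_length]

lemma filter_idxD_card (l : List DyckStep) {m : ℕ} (hm : m ≤ l.length) :
    ((idxD l).filter (· < m)).card = (l.take m).count D := by
  rw [← card_filter_range_eq_count l D m hm]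
  congr 1
  ext v
  simp only [idxD, Finset.mem_filter, Finset.mem_range]
  constructor
  · rintro ⟨⟨_, hs⟩, hvm⟩; exact ⟨hvm, hs⟩
  · rintro ⟨hvm, hs⟩; exact ⟨⟨by omega, hs⟩, hvm⟩

lemma filter_idxU_card (l : List DyckStep) {m : ℕ} (hm : m ≤ l.length) :
    ((idxU l).filter (· < m)).card = (l.take m).count U := by
  rw [← card_filter_range_eq_count l U m hm]
  congr 1
  ext v
  simp only [idxU, Finset.mem_filter, Finset.mem_range]
  constructor
  · rintro ⟨⟨_, hs⟩, hvm⟩; exact ⟨hvm, hs⟩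
  · rintro ⟨hvm, hs⟩; exact ⟨⟨by omega, hs⟩, hvm⟩

lemma idx_disj {l : List DyckStep} {v : ℕ} (hU : v ∈ idxU l) (hD : v ∈ idxD l) : False := by
  simp only [idxU, idxD, Finset.mem_filter] at hU hD
  rw [hU.2] at hD
  exact absurd hD.2 (by simp)

lemma idx_union {l : List DyckStep} {v : ℕ} (hv : v < l.length) :
    v ∈ idxU l ∨ v ∈ idxD l := by
  rcases (l.getD v U).dichotomy with h | h
  · exact Or.inl (Finset.mem_filter.mpr ⟨Finset.mem_range.mpr hv, h⟩)
  · exact Or.inr (Finset.mem_filter.mpr ⟨Finset.mem_range.mpr hv, h⟩)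

lemma idxU_lt {l : List DyckStep} {v : ℕ} (hv : v ∈ idxU l) : v < l.length := by
  simp only [idxU, Finset.mem_filter, Finset.mem_range] at hv; exact hv.1

lemma idxD_lt {l : List DyckStep} {v : ℕ} (hv : v ∈ idxD l) : v < l.length := by
  simp only [idxD, Finset.mem_filter, Finset.mem_range] at hv; exact hv.1

/-- the filling associated to a list of steps: column `j` of the bottom row holds
(one plus) the position of the `j`-th `U`, similarly for the top row with `D`s -/
def mkF (n : ℕ) (l : List DyckStep) : ℕ → ℕ → ℕ := fun i j =>
  if 1 ≤ j ∧ j ≤ n then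
    if i = 1 then esort (idxU l) (j-1) + 1
    else if i = 2 then esort (idxD l) (j-1) + 1
    else 0
  else 0

lemma mkF_one {n l} {j : ℕ} (h1 : 1 ≤ j) (h2 : j ≤ n) :
    mkF n l 1 j = esort (idxU l) (j-1) + 1 := by simp [mkF, h1, h2]

lemma mkF_two {n l} {j : ℕ} (h1 : 1 ≤ j) (h2 : j ≤ n) :
    mkF n l 2 j = esort (idxD l) (j-1) + 1 := by simp [mkF, h1, h2]

lemma matchAt_iff (F : ℕ → ℕ → ℕ) (i : ℕ) (hi : 1 ≤ i) :
    MatchAt 2 2 P22 F i ↔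
      (F 1 i < F 1 (i+1) ∧ F 1 (i+1) < F 2 i ∧ F 2 i < F 2 (i+1)) := by
  have e1 : i - 1 + 1 = i := by omega
  have e2 : i - 1 + 2 = i + 1 := by omega
  constructor
  · intro h
    refine ⟨?_, ?_, ?_⟩
    · have := h 1 1 1 2 le_rfl one_le_two le_rfl one_le_two le_rfl one_le_two
        one_le_two le_rfl
      rw [e1, e2] at this
      exact this.mpr (by norm_num [P22])
    · have := h 1 2 2 1 (by norm_num) (by norm_num) (by norm_num) (by norm_num)
        (by norm_num) (by norm_num) (by norm_num) (by norm_num)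
      rw [e1, e2] at this
      exact this.mpr (by norm_num [P22])
    · have := h 2 1 2 2 (by norm_num) (by norm_num) (by norm_num) (by norm_num)
        (by norm_num) (by norm_num) (by norm_num) (by norm_num)
      rw [e1, e2] at this
      exact this.mpr (by norm_num [P22])
  · rintro ⟨h1, h2, h3⟩ a b c d ha1 ha2 hb1 hb2 hc1 hc2 hd1 hd2
    interval_cases a <;> interval_cases b <;> interval_cases c <;> interval_cases d <;>
      simp only [e1, e2] <;> norm_num [P22] <;> omega

lemma chain_mono {f : ℕ → ℕ} {n : ℕ} (h : ∀ i, 1 ≤ i → i + 1 ≤ n → f i < f (i+1)) :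
    ∀ j j', 1 ≤ j → j < j' → j' ≤ n → f j < f j' := by
  intro j j' hj
  induction j' with
  | zero => intro h1 h2; omega
  | succ m ih =>
    intro hjj' hj'
    by_cases hm : j = m
    · subst hm; exact h j hj hj'
    · exact lt_trans (ih (by omega) (by omega)) (h m (by omega) hj')

section MkFFull

variable {n : ℕ} {l : List DyckStep} (hn : 2 ≤ n) (hlen : l.length = 2*n)
  (hU : (idxU l).card = n) (hD : (idxD l).card = n)
  (hstrict : ∀ m, 1 ≤ m → m ≤ 2*n - 1 →
    ((idxD l).filter (· < m)).card < ((idxU l).filter (· < m)).card)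

include hn hlen hU hD hstrict

lemma cross_ineq : ∀ j, 1 ≤ j → j ≤ n - 1 → esort (idxU l) j < esort (idxD l) (j-1) := by
  intro j h1 h2
  by_contra hc
  push_neg at hc
  have hjn : j < n := by omega
  have htmem : esort (idxD l) (j-1) ∈ idxD l := esort_mem hD (by omega)
  have hbmem : esort (idxU l) j ∈ idxU l := esort_mem hU hjn
  have hne : esort (idxD l) (j-1) ≠ esort (idxU l) j := by
    intro he; exact idx_disj hbmem (he ▸ htmem)
  have hb2n : esort (idxU l) j < 2*n := hlen ▸ idxU_lt hbmem
  set t := esort (idxD l) (j-1) with ht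
  have h1' : j ≤ ((idxD l).filter (· < t+1)).card := by
    have := le_card_filter hD (j := j-1) (m := t+1) (by omega) (by omega)
    omega
  have h2' : ((idxU l).filter (· < t+1)).card ≤ j :=
    card_filter_le hU hjn (by omega)
  have := hstrict (t+1) (by omega) (by omega)
  omega

lemma mkF_full :
    IsFilling n 2 (mkF n l) ∧
      ∀ i, 1 ≤ i → i ≤ n - 1 → ∃ P ∈ ({P22} : Set (ℕ → ℕ → ℕ)), MatchAt 2 2 P (mkF n l) i := by
  have hcross := cross_ineq hn hlen hU hD hstrict
  -- basic value facts
  have hUmem : ∀ j, 1 ≤ j → j ≤ n → esort (idxU l) (j-1) ∈ idxU l :=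
    fun j h1 h2 => esort_mem hU (by omega)
  have hDmem : ∀ j, 1 ≤ j → j ≤ n → esort (idxD l) (j-1) ∈ idxD l :=
    fun j h1 h2 => esort_mem hD (by omega)
  have hUlt : ∀ j, 1 ≤ j → j ≤ n → esort (idxU l) (j-1) < 2*n :=
    fun j h1 h2 => hlen ▸ idxU_lt (hUmem j h1 h2)
  have hDlt : ∀ j, 1 ≤ j → j ≤ n → esort (idxD l) (j-1) < 2*n :=
    fun j h1 h2 => hlen ▸ idxD_lt (hDmem j h1 h2)
  -- columns
  have hcol : ∀ j, 1 ≤ j → j ≤ n → esort (idxU l) (j-1) < esort (idxD l) (j-1) := by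
    intro j h1 h2
    by_cases hjn : j ≤ n - 1
    · calc esort (idxU l) (j-1) < esort (idxU l) j := esort_lt_esort hU (by omega) (by omega)
        _ < esort (idxD l) (j-1) := hcross j h1 hjn
    · calc esort (idxU l) (j-1) < esort (idxD l) (j-1-1) :=
            hcross (j-1) (by omega) (by omega)
        _ < esort (idxD l) (j-1) := esort_lt_esort hD (by omega) (by omega)
  refine ⟨⟨?_, ⟨?_, ?_, ?_⟩, ?_⟩, ?_⟩
  · -- support
    intro i j hne
    simp only [mkF] at hne
    split_ifs at hne with h1 h2 h3
    · exact ⟨by omega, by omega, h1.1, h1.2⟩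
    · exact ⟨by omega, by omega, h1.1, h1.2⟩
    · exact absurd rfl hne
    · exact absurd rfl hne
  · -- MapsTo
    rintro ⟨i, j⟩ hmem
    simp only [Set.mem_prod, Set.mem_Icc] at hmem
    obtain ⟨⟨hi1, hi2⟩, hj1, hj2⟩ := hmem
    simp only [Set.mem_Icc]
    interval_cases i
    · rw [mkF_one hj1 hj2]
      have := hUlt j hj1 hj2
      omega
    · rw [mkF_two hj1 hj2]
      have := hDlt j hj1 hj2
      omega
  · -- InjOn
    rintro ⟨i, j⟩ hmem ⟨i', j'⟩ hmem' heq
    simp only [Set.mem_prod, Set.mem_Icc] at hmem hmem'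
    obtain ⟨⟨hi1, hi2⟩, hj1, hj2⟩ := hmem
    obtain ⟨⟨hi1', hi2'⟩, hj1', hj2'⟩ := hmem'
    simp only at heq
    have hjj : ∀ (s : Finset ℕ) (k : ℕ), s.card = k → k = n →
        esort s (j-1) = esort s (j'-1) → j = j' := by
      intro s k hk hkn he
      subst hkn
      rcases lt_trichotomy j j' with hlt | heqj | hgt
      · exact absurd he (ne_of_lt (esort_lt_esort hk (by omega) (by omega)))
      · exact heqj
      · exact absurd he.symm (ne_of_lt (esort_lt_esort hk (by omega) (by omega)))
    interval_cases i <;> interval_cases i'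
    · rw [mkF_one hj1 hj2, mkF_one hj1' hj2'] at heq
      have := hjj (idxU l) n hU rfl (by omega)
      simp [this]
    · rw [mkF_one hj1 hj2, mkF_two hj1' hj2'] at heq
      have he : esort (idxU l) (j-1) = esort (idxD l) (j'-1) := by omega
      exact absurd (he ▸ hDmem j' hj1' hj2') (fun hh => idx_disj (hUmem j hj1 hj2) hh)
    · rw [mkF_two hj1 hj2, mkF_one hj1' hj2'] at heq
      have he : esort (idxU l) (j'-1) = esort (idxD l) (j-1) := by omega
      exact absurd (he ▸ hDmem j hj1 hj2) (fun hh => idx_disj (hUmem j' hj1' hj2') hh)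
    · rw [mkF_two hj1 hj2, mkF_two hj1' hj2'] at heq
      have := hjj (idxD l) n hD rfl (by omega)
      simp [this]
  · -- SurjOn
    intro v hv
    simp only [Set.mem_Icc] at hv
    have hv' : v - 1 < l.length := by omega
    rcases idx_union hv' with h | h
    · obtain ⟨j, hj, hej⟩ := esort_surj hU h
      refine ⟨(1, j+1), ?_, ?_⟩
      · simp only [Set.mem_prod, Set.mem_Icc]
        omega
      · show mkF n l 1 (j+1) = v
        rw [mkF_one (by omega) (by omega)]
        simp only [Nat.add_sub_cancel]
        omega
    · obtain ⟨j, hj, hej⟩ := esort_surj hD h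
      refine ⟨(2, j+1), ?_, ?_⟩
      · simp only [Set.mem_prod, Set.mem_Icc]
        omega
      · show mkF n l 2 (j+1) = v
        rw [mkF_two (by omega) (by omega)]
        simp only [Nat.add_sub_cancel]
        omega
  · -- column increase
    intro i j hi1 hi2 hj1 hj2
    have hi : i = 1 := by omega
    subst hi
    rw [mkF_one hj1 hj2, show (1:ℕ)+1 = 2 from rfl, mkF_two hj1 hj2]
    have := hcol j hj1 hj2
    omega
  · -- matches
    intro i h1 h2
    refine ⟨P22, rfl, (matchAt_iff _ i h1).mpr ⟨?_, ?_, ?_⟩⟩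
    · rw [mkF_one h1 (by omega), mkF_one (by omega) (by omega)]
      have : esort (idxU l) (i-1) < esort (idxU l) (i+1-1) :=
        esort_lt_esort hU (by omega) (by omega)
      omega
    · rw [mkF_one (by omega) (by omega), mkF_two h1 (by omega)]
      have := hcross i h1 h2
      rw [show i + 1 - 1 = i from rfl]
      omega
    · rw [mkF_two h1 (by omega), mkF_two (by omega) (by omega)]
      have : esort (idxD l) (i-1) < esort (idxD l) (i+1-1) :=
        esort_lt_esort hD (by omega) (by omega)
      omega

end MkFFull

/-- the full word of a Dyck word: a `U` in front and a `D` at the end -/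
def lOf (p : DyckWord) : List DyckStep := U :: (p.toList ++ [D])

lemma lOf_props {n : ℕ} (hn : 2 ≤ n) (p : DyckWord) (hp : p.semilength = n - 1) :
    (lOf p).length = 2*n ∧ (idxU (lOf p)).card = n ∧ (idxD (lOf p)).card = n ∧
      ∀ m, 1 ≤ m → m ≤ 2*n - 1 →
        ((idxD (lOf p)).filter (· < m)).card < ((idxU (lOf p)).filter (· < m)).card := by
  have hplen : p.toList.length = 2*(n-1) := by
    have := p.two_mul_semilength_eq_length
    omega
  have hpU : p.toList.count U = n - 1 := hp
  have hpD : p.toList.count D = n - 1 := p.count_U_eq_count_D ▸ hp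
  have hlen : (lOf p).length = 2*n := by
    simp [lOf]
    omega
  have hcU : (lOf p).count U = n := by
    simp [lOf, List.count_cons, List.count_append, List.count_singleton', hpU]
    omega
  have hcD : (lOf p).count D = n := by
    simp [lOf, List.count_cons, List.count_append, List.count_singleton', hpD]
    omega
  refine ⟨hlen, by rw [card_idxU, hcU], by rw [card_idxD, hcD], ?_⟩
  intro m hm1 hm2
  rw [filter_idxD_card _ (by omega), filter_idxU_card _ (by omega)]
  obtain ⟨m', rfl⟩ : ∃ m', m = m' + 1 := ⟨m - 1, by omega⟩
  rw [lOf, List.take_succ_cons, List.take_append_of_le_length (by omega)]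
  have := p.count_D_le_count_U m'
  simp [List.count_cons]
  omega

lemma mkF_inj {n : ℕ} (hn : 2 ≤ n) {l₁ l₂ : List DyckStep}
    (hlen₁ : l₁.length = 2*n) (hlen₂ : l₂.length = 2*n)
    (hU₁ : (idxU l₁).card = n) (hD₁ : (idxD l₁).card = n)
    (hU₂ : (idxU l₂).card = n) (hD₂ : (idxD l₂).card = n)
    (heq : mkF n l₁ = mkF n l₂) : l₁ = l₂ := by
  have hDeq : idxD l₁ = idxD l₂ := by
    have he : ∀ j, j < n → esort (idxD l₁) j = esort (idxD l₂) j := by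
      intro j hj
      have h1 := congrFun (congrFun heq 2) (j+1)
      rw [mkF_two (by omega) (by omega), mkF_two (by omega) (by omega)] at h1
      simp only [Nat.add_sub_cancel] at h1
      omega
    ext v
    constructor
    · intro hv
      obtain ⟨j, hj, rfl⟩ := esort_surj hD₁ hv
      rw [he j hj]; exact esort_mem hD₂ hj
    · intro hv
      obtain ⟨j, hj, rfl⟩ := esort_surj hD₂ hv
      rw [← he j hj]; exact esort_mem hD₁ hj
  apply List.ext_getElem (by omega)
  intro v hv1 hv2
  rcases (l₁[v]).dichotomy with h | h <;> rcases (l₂[v]).dichotomy with h' | h'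
  · rw [h, h']
  · exfalso
    have hm2 : v ∈ idxD l₂ := Finset.mem_filter.mpr
      ⟨Finset.mem_range.mpr hv2, by rw [List.getD_eq_getElem _ _ hv2, h']⟩
    rw [← hDeq] at hm2
    have hm1 : v ∈ idxU l₁ := Finset.mem_filter.mpr
      ⟨Finset.mem_range.mpr hv1, by rw [List.getD_eq_getElem _ _ hv1, h]⟩
    exact idx_disj hm1 hm2
  · exfalso
    have hm1 : v ∈ idxD l₁ := Finset.mem_filter.mpr
      ⟨Finset.mem_range.mpr hv1, by rw [List.getD_eq_getElem _ _ hv1, h]⟩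
    rw [hDeq] at hm1
    have hm2 : v ∈ idxU l₂ := Finset.mem_filter.mpr
      ⟨Finset.mem_range.mpr hv2, by rw [List.getD_eq_getElem _ _ hv2, h']⟩
    exact idx_disj hm2 hm1
  · rw [h, h']

lemma exists_dyck {n : ℕ} (hn : 2 ≤ n) {l : List DyckStep}
    (hlen : l.length = 2*n) (hU : (idxU l).card = n) (hD : (idxD l).card = n)
    (hstrict : ∀ m, 1 ≤ m → m ≤ 2*n - 1 →
      ((idxD l).filter (· < m)).card < ((idxU l).filter (· < m)).card) :
    ∃ p : DyckWord, p.semilength = n - 1 ∧ lOf p = l := by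
  have hcU : l.count U = n := by rw [← card_idxU, hU]
  have hcD : l.count D = n := by rw [← card_idxD, hD]
  have hne : l ≠ [] := by intro h; rw [h] at hlen; simp only [List.length_nil] at hlen; omega
  -- head is U
  have hhead : l.getD 0 U = U := by
    have h1 := hstrict 1 le_rfl (by omega)
    rw [filter_idxD_card _ (by omega), filter_idxU_card _ (by omega)] at h1
    rcases (l.getD 0 U).dichotomy with h | h
    · exact h
    · exfalso
      have hget : l[0]? = some (l.getD 0 U) := by
        rw [List.getD_eq_getElem _ _ (by omega), List.getElem?_eq_getElem (by omega)]
      have : l.take 1 = [l.getD 0 U] := by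
        rw [show (1:ℕ) = 0 + 1 from rfl, List.take_succ, List.take_zero, hget]
        rfl
      rw [this, h] at h1
      simp at h1
  -- last is D
  have hlast : l.getD (2*n-1) U = D := by
    rcases (l.getD (2*n-1) U).dichotomy with h | h
    · exfalso
      have hnotin : (2*n-1) ∉ idxD l := by
        intro hmem
        simp only [idxD, Finset.mem_filter] at hmem
        rw [h] at hmem
        exact absurd hmem.2 (by simp)
      have hfe : (idxD l).filter (· < 2*n-1) = idxD l := by
        apply Finset.filter_true_of_mem
        intro v hv
        have := idxD_lt hv
        have hvne : v ≠ 2*n-1 := fun hh => hnotin (hh ▸ hv)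
        try simp only [decide_eq_true_eq]
        omega
      have h1 := hstrict (2*n-1) (by omega) le_rfl
      rw [hfe, hD] at h1
      have h2 : ((idxU l).filter (· < 2*n-1)).card ≤ n := by
        rw [← hU]; exact Finset.card_filter_le _ _
      omega
    · exact h
  -- decompose l
  obtain ⟨l', hl'⟩ : ∃ l', l = U :: l' := by
    rcases l with - | ⟨a, t⟩
    · exact absurd rfl hne
    · exact ⟨t, by rw [show a = U from hhead]⟩
  have hl'ne : l' ≠ [] := by
    intro h; rw [hl', h] at hlen
    simp only [List.length_cons, List.length_nil] at hlen; omega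
  have hlen' : l'.length = 2*n - 1 := by
    rw [hl'] at hlen; simp only [List.length_cons] at hlen; omega
  rw [hl', show 2*n-1 = (2*n-2)+1 from by omega, List.getD_cons_succ] at hlast
  have hl'last : l'.getLast hl'ne = D := by
    rw [List.getLast_eq_getElem, ← List.getD_eq_getElem _ U (by omega),
      show l'.length - 1 = 2*n-2 from by omega]
    exact hlast
  set mid := l'.dropLast with hmiddef
  have hmid : mid ++ [D] = l' := by
    rw [hmiddef, ← hl'last]
    exact List.dropLast_append_getLast hl'ne
  have hmidlen : mid.length = 2*n - 2 := by
    rw [hmiddef, List.length_dropLast]; omega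
  have hl : l = U :: (mid ++ [D]) := by rw [hmid, hl']
  have hcUmid : mid.count U = n - 1 := by
    rw [hl] at hcU
    simp [List.count_cons, List.count_append, List.count_singleton'] at hcU
    omega
  have hcDmid : mid.count D = n - 1 := by
    rw [hl] at hcD
    simp [List.count_cons, List.count_append, List.count_singleton'] at hcD
    omega
  have hpre : ∀ i, (mid.take i).count D ≤ (mid.take i).count U := by
    intro i
    by_cases hi : mid.length ≤ i
    · rw [List.take_of_length_le hi]
      omega
    · push_neg at hi
      have h1 := hstrict (i+1) (by omega) (by omega)
      rw [filter_idxD_card _ (by omega), filter_idxU_card _ (by omega)] at h1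
      rw [hl, List.take_succ_cons, List.take_append_of_le_length (by omega)] at h1
      simp [List.count_cons] at h1
      omega
  refine ⟨⟨mid, by omega, hpre⟩, ?_, ?_⟩
  · show mid.count U = n - 1
    exact hcUmid
  · show U :: (mid ++ [D]) = l
    exact hl.symm

lemma exists_word {n : ℕ} (hn : 2 ≤ n) {F : ℕ → ℕ → ℕ} (hfill : IsFilling n 2 F)
    (hmatch : ∀ i, 1 ≤ i → i ≤ n - 1 →
      ∃ P ∈ ({P22} : Set (ℕ → ℕ → ℕ)), MatchAt 2 2 P F i) :
    ∃ l : List DyckStep, l.length = 2*n ∧ (idxU l).card = n ∧ (idxD l).card = n ∧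
      (∀ m, 1 ≤ m → m ≤ 2*n - 1 →
        ((idxD l).filter (· < m)).card < ((idxU l).filter (· < m)).card) ∧
      mkF n l = F := by
  classical
  obtain ⟨hsupp, hbij, hcolF⟩ := hfill
  have hb : ∀ i, 1 ≤ i → i ≤ n-1 →
      F 1 i < F 1 (i+1) ∧ F 1 (i+1) < F 2 i ∧ F 2 i < F 2 (i+1) := by
    intro i h1 h2
    obtain ⟨P, hP, hm⟩ := hmatch i h1 h2
    rw [Set.mem_singleton_iff] at hP
    subst hP
    exact (matchAt_iff F i h1).mp hm
  have mono1 : ∀ j j', 1 ≤ j → j < j' → j' ≤ n → F 1 j < F 1 j' :=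
    chain_mono (fun i h1 h2 => (hb i h1 (by omega)).1)
  have mono2 : ∀ j j', 1 ≤ j → j < j' → j' ≤ n → F 2 j < F 2 j' :=
    chain_mono (fun i h1 h2 => (hb i h1 (by omega)).2.2)
  have hcross : ∀ i, 1 ≤ i → i ≤ n-1 → F 1 (i+1) < F 2 i := fun i h1 h2 => (hb i h1 h2).2.1
  have hcol : ∀ j, 1 ≤ j → j ≤ n → F 1 j < F 2 j := by
    intro j h1 h2
    have h := hcolF 1 j le_rfl one_lt_two h1 h2
    norm_num at h
    exact h
  have hmaps : ∀ i j, 1 ≤ i → i ≤ 2 → 1 ≤ j → j ≤ n → 1 ≤ F i j ∧ F i j ≤ 2*n := by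
    intro i j h1 h2 h3 h4
    have := hbij.1 (show (i, j) ∈ Set.Icc 1 2 ×ˢ Set.Icc 1 n from by
      simp only [Set.mem_prod, Set.mem_Icc]; omega)
    simpa [Set.mem_Icc] using this
  have hF11 : F 1 1 = 1 := by
    obtain ⟨⟨i, j⟩, hmem, hval⟩ := hbij.2.2
      (show (1:ℕ) ∈ Set.Icc 1 (2*n) from by simp only [Set.mem_Icc]; omega)
    simp only [Set.mem_prod, Set.mem_Icc] at hmem
    obtain ⟨⟨hi1, hi2⟩, hj1, hj2⟩ := hmem
    have hval' : F i j = 1 := hval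
    interval_cases i
    · rcases eq_or_lt_of_le hj1 with h | h
      · rw [← h] at hval'; exact hval'
      · have := mono1 1 j le_rfl h hj2
        have := (hmaps 1 1 le_rfl one_le_two le_rfl (by omega)).1
        omega
    · have := hcol j hj1 hj2
      have := (hmaps 1 j le_rfl one_le_two hj1 hj2).1
      omega
  have htop : ∃ j, 1 ≤ j ∧ j ≤ n ∧ F 2 j = 2*n := by
    obtain ⟨⟨i, j⟩, hmem, hval⟩ := hbij.2.2
      (show (2*n:ℕ) ∈ Set.Icc 1 (2*n) from by simp only [Set.mem_Icc]; omega)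
    simp only [Set.mem_prod, Set.mem_Icc] at hmem
    obtain ⟨⟨hi1, hi2⟩, hj1, hj2⟩ := hmem
    have hval' : F i j = 2*n := hval
    interval_cases i
    · exfalso
      have := hcol j hj1 hj2
      have := (hmaps 2 j one_le_two le_rfl hj1 hj2).2
      omega
    · exact ⟨j, hj1, hj2, hval'⟩
  set Tset := Finset.image (fun j => F 2 j - 1) (Finset.Icc 1 n) with hTdef
  set Bset := Finset.image (fun j => F 1 j - 1) (Finset.Icc 1 n) with hBdef
  have hTmem : ∀ j, 1 ≤ j → j ≤ n → F 2 j - 1 ∈ Tset := fun j h1 h2 =>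
    Finset.mem_image.mpr ⟨j, Finset.mem_Icc.mpr ⟨h1, h2⟩, rfl⟩
  have hBmem : ∀ j, 1 ≤ j → j ≤ n → F 1 j - 1 ∈ Bset := fun j h1 h2 =>
    Finset.mem_image.mpr ⟨j, Finset.mem_Icc.mpr ⟨h1, h2⟩, rfl⟩
  have hTlt : ∀ v ∈ Tset, v < 2*n := by
    intro v hv
    obtain ⟨j, hj, rfl⟩ := Finset.mem_image.mp hv
    rw [Finset.mem_Icc] at hj
    have := hmaps 2 j one_le_two le_rfl hj.1 hj.2
    omega
  have hBlt : ∀ v ∈ Bset, v < 2*n := by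
    intro v hv
    obtain ⟨j, hj, rfl⟩ := Finset.mem_image.mp hv
    rw [Finset.mem_Icc] at hj
    have h1 := hmaps 1 j le_rfl one_le_two hj.1 hj.2
    have := hcol j hj.1 hj.2
    have := (hmaps 2 j one_le_two le_rfl hj.1 hj.2).2
    omega
  have hdisjTB : ∀ v, v ∈ Tset → v ∈ Bset → False := by
    intro v hvT hvB
    obtain ⟨j, hj, hje⟩ := Finset.mem_image.mp hvT
    obtain ⟨j', hj', hje'⟩ := Finset.mem_image.mp hvB
    rw [Finset.mem_Icc] at hj hj'
    have h2 := (hmaps 2 j one_le_two le_rfl hj.1 hj.2).1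
    have h1 := (hmaps 1 j' le_rfl one_le_two hj'.1 hj'.2).1
    have heqv : F 2 j = F 1 j' := by omega
    have hmem1 : ((2:ℕ), j) ∈ Set.Icc 1 2 ×ˢ Set.Icc 1 n := by
      simp only [Set.mem_prod, Set.mem_Icc]; omega
    have hmem2 : ((1:ℕ), j') ∈ Set.Icc 1 2 ×ˢ Set.Icc 1 n := by
      simp only [Set.mem_prod, Set.mem_Icc]; omega
    have hinj := hbij.2.1 hmem1 hmem2 heqv
    have := congrArg Prod.fst hinj
    simp at this
  have cardT : Tset.card = n := by
    have hinj : Set.InjOn (fun j => F 2 j - 1) (Finset.Icc 1 n) := by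
      intro a ha b hb heq
      simp only [Finset.coe_Icc, Set.mem_Icc] at ha hb
      have heq' : F 2 a - 1 = F 2 b - 1 := heq
      have h1 := (hmaps 2 a one_le_two le_rfl ha.1 ha.2).1
      have h1b := (hmaps 2 b one_le_two le_rfl hb.1 hb.2).1
      rcases lt_trichotomy a b with h | h | h
      · have := mono2 a b ha.1 h hb.2; omega
      · exact h
      · have := mono2 b a hb.1 h ha.2; omega
    rw [hTdef, Finset.card_image_of_injOn hinj, Nat.card_Icc]
    omega
  have cardB : Bset.card = n := by
    have hinj : Set.InjOn (fun j => F 1 j - 1) (Finset.Icc 1 n) := by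
      intro a ha b hb heq
      simp only [Finset.coe_Icc, Set.mem_Icc] at ha hb
      have heq' : F 1 a - 1 = F 1 b - 1 := heq
      have h1 := (hmaps 1 a le_rfl one_le_two ha.1 ha.2).1
      have h1b := (hmaps 1 b le_rfl one_le_two hb.1 hb.2).1
      rcases lt_trichotomy a b with h | h | h
      · have := mono1 a b ha.1 h hb.2; omega
      · exact h
      · have := mono1 b a hb.1 h ha.2; omega
    rw [hBdef, Finset.card_image_of_injOn hinj, Nat.card_Icc]
    omega
  have hesortT : ∀ j, j < n → esort Tset j = F 2 (j+1) - 1 := by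
    intro j hj
    exact (esort_unique cardT (f := fun j => F 2 (j+1) - 1)
      (fun j hj => hTmem (j+1) (by omega) (by omega))
      (fun j j' hjj hj' => by
        show F 2 (j+1) - 1 < F 2 (j'+1) - 1
        have := mono2 (j+1) (j'+1) (by omega) (by omega) (by omega)
        have := (hmaps 2 (j+1) one_le_two le_rfl (by omega) (by omega)).1
        omega) j hj).symm
  have hesortB : ∀ j, j < n → esort Bset j = F 1 (j+1) - 1 := by
    intro j hj
    exact (esort_unique cardB (f := fun j => F 1 (j+1) - 1)
      (fun j hj => hBmem (j+1) (by omega) (by omega))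
      (fun j j' hjj hj' => by
        show F 1 (j+1) - 1 < F 1 (j'+1) - 1
        have := mono1 (j+1) (j'+1) (by omega) (by omega) (by omega)
        have := (hmaps 1 (j+1) le_rfl one_le_two (by omega) (by omega)).1
        omega) j hj).symm
  set l := (List.range (2*n)).map (fun v => if v ∈ Tset then D else U) with hldef
  have hlen : l.length = 2*n := by simp [hldef]
  have hgetD : ∀ v, v < 2*n → l.getD v U = if v ∈ Tset then D else U := by
    intro v hv
    rw [List.getD_eq_getElem _ _ (by rw [hlen]; exact hv)]
    simp [hldef]
  have hidxD : idxD l = Tset := by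
    ext v
    simp only [idxD, Finset.mem_filter, Finset.mem_range, hlen]
    constructor
    · rintro ⟨hv, hd⟩
      rw [hgetD v hv] at hd
      by_contra hT
      rw [if_neg hT] at hd
      exact absurd hd (by simp)
    · intro hT
      exact ⟨hTlt v hT, by rw [hgetD v (hTlt v hT), if_pos hT]⟩
  have hidxU : idxU l = Bset := by
    ext v
    simp only [idxU, Finset.mem_filter, Finset.mem_range, hlen]
    constructor
    · rintro ⟨hv, hd⟩
      have hT : v ∉ Tset := by
        intro hT; rw [hgetD v hv, if_pos hT] at hd; exact absurd hd (by simp)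
      obtain ⟨⟨i, j⟩, hmem, hval⟩ := hbij.2.2
        (show (v+1:ℕ) ∈ Set.Icc 1 (2*n) from by simp only [Set.mem_Icc]; omega)
      simp only [Set.mem_prod, Set.mem_Icc] at hmem
      obtain ⟨⟨hi1, hi2⟩, hj1, hj2⟩ := hmem
      have hval' : F i j = v + 1 := hval
      interval_cases i
      · exact Finset.mem_image.mpr ⟨j, Finset.mem_Icc.mpr ⟨hj1, hj2⟩, by omega⟩
      · exact absurd (Finset.mem_image.mpr
          ⟨j, Finset.mem_Icc.mpr ⟨hj1, hj2⟩, by omega⟩ : v ∈ Tset) hT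
    · intro hB
      refine ⟨hBlt v hB, ?_⟩
      have hT : v ∉ Tset := fun hT => hdisjTB v hT hB
      rw [hgetD v (hBlt v hB), if_neg hT]
  have hstrict : ∀ m, 1 ≤ m → m ≤ 2*n - 1 →
      ((idxD l).filter (· < m)).card < ((idxU l).filter (· < m)).card := by
    intro m hm1 hm2
    rw [hidxD, hidxU]
    set j := (Tset.filter (· < m)).card with hjd
    have h2n1 : (2*n-1 : ℕ) ∈ Tset := by
      obtain ⟨jj, hj1, hj2, hj3⟩ := htop
      exact Finset.mem_image.mpr ⟨jj, Finset.mem_Icc.mpr ⟨hj1, hj2⟩, by omega⟩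
    have hjn : j ≤ n - 1 := by
      have hsub : Tset.filter (· < m) ⊆ Tset.erase (2*n-1) := by
        intro v hv
        rw [Finset.mem_filter] at hv
        refine Finset.mem_erase.mpr ⟨?_, hv.1⟩
        have hvm := hv.2
        try simp only [decide_eq_true_eq] at hvm
        omega
      have := Finset.card_le_card hsub
      rw [Finset.card_erase_of_mem h2n1, cardT] at this
      omega
    suffices h : esort Bset j < m by
      have := le_card_filter cardB (show j < n from by omega) h
      omega
    by_cases hj0 : j = 0
    · rw [hj0]
      have h0B : (0:ℕ) ∈ Bset := Finset.mem_image.mpr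
        ⟨1, Finset.mem_Icc.mpr ⟨le_rfl, by omega⟩, by rw [hF11]⟩
      rw [esort_zero_of_zero_mem cardB h0B (by omega)]
      omega
    · have hTe : esort Tset (j-1) < m := by
        by_contra hc
        push_neg at hc
        have := card_filter_le cardT (show j-1 < n from by omega) hc
        omega
      have e1 := hesortB j (by omega)
      have e2 := hesortT (j-1) (by omega)
      rw [show j - 1 + 1 = j from by omega] at e2
      have hcr := hcross j (by omega) (by omega)
      have hge1 := (hmaps 1 (j+1) le_rfl one_le_two (by omega) (by omega)).1
      have hge2 := (hmaps 2 j one_le_two le_rfl (by omega) (by omega)).1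
      omega
  refine ⟨l, hlen, ?_, ?_, hstrict, ?_⟩
  · rw [hidxU, cardB]
  · rw [hidxD, cardT]
  · funext i j
    by_cases hj : 1 ≤ j ∧ j ≤ n
    · by_cases hi1 : i = 1
      · subst hi1
        rw [mkF_one hj.1 hj.2, hidxU]
        have he := hesortB (j-1) (by omega)
        rw [show j - 1 + 1 = j from by omega] at he
        have := (hmaps 1 j le_rfl one_le_two hj.1 hj.2).1
        omega
      · by_cases hi2 : i = 2
        · subst hi2
          rw [mkF_two hj.1 hj.2, hidxD]
          have he := hesortT (j-1) (by omega)
          rw [show j - 1 + 1 = j from by omega] at he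
          have := (hmaps 2 j one_le_two le_rfl hj.1 hj.2).1
          omega
        · have hz : mkF n l i j = 0 := by simp [mkF, hi1, hi2]
          rw [hz]
          by_contra hne
          have := hsupp i j (Ne.symm hne)
          omega
    · have hz : mkF n l i j = 0 := by simp [mkF, hj]
      rw [hz]
      by_contra hne
      have := hsupp i j (Ne.symm hne)
      omega

end Stmt13Aux

/-- For all `n ≥ 2`, `full_n^{P_2^{(2,2)}} = C_{n-1}`, the `(n-1)`-st Catalan number. -/
theorem stmt13 (n : ℕ) (hn : 2 ≤ n) :
    fullCount n 2 {P22} = catalan (n - 1) := by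
  have key : Nat.card {p : DyckWord // p.semilength = n - 1} =
      Nat.card {F : ℕ → ℕ → ℕ // IsFilling n 2 F ∧
        ∀ i, 1 ≤ i → i ≤ n - 1 → ∃ P ∈ ({P22} : Set (ℕ → ℕ → ℕ)), MatchAt 2 2 P F i} := by
    apply Nat.card_eq_of_bijective
      (f := fun p => ⟨Stmt13Aux.mkF n (Stmt13Aux.lOf p.1), by
        obtain ⟨h1, h2, h3, h4⟩ := Stmt13Aux.lOf_props hn p.1 p.2
        exact Stmt13Aux.mkF_full hn h1 h2 h3 h4⟩)
    constructor
    · rintro ⟨p, hp⟩ ⟨q, hq⟩ heq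
      simp only [Subtype.mk.injEq] at heq
      obtain ⟨hp1, hp2, hp3, -⟩ := Stmt13Aux.lOf_props hn p hp
      obtain ⟨hq1, hq2, hq3, -⟩ := Stmt13Aux.lOf_props hn q hq
      have hll := Stmt13Aux.mkF_inj hn hp1 hq1 hp2 hp3 hq2 hq3 heq
      have hl : p.toList ++ [DyckStep.D] = q.toList ++ [DyckStep.D] := by
        simpa [Stmt13Aux.lOf] using hll
      exact Subtype.ext (DyckWord.ext (List.append_cancel_right hl))
    · rintro ⟨F, hfill, hmatch⟩
      obtain ⟨l, h1, h2, h3, h4, h5⟩ := Stmt13Aux.exists_word hn hfill hmatch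
      obtain ⟨p, hp, hlp⟩ := Stmt13Aux.exists_dyck hn h1 h2 h3 h4
      refine ⟨⟨p, hp⟩, ?_⟩
      apply Subtype.ext
      show Stmt13Aux.mkF n (Stmt13Aux.lOf p) = F
      rw [hlp, h5]
  simp only [fullCount]
  rw [← key, Nat.card_eq_fintype_card, DyckWord.card_dyckWord_semilength_eq_catalan]
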